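/- Let p be an odd prime, n ≥ 1, and consider the congruence a x² + B x + c ≡ 0 (mod p^n) with p ∤ a. Write Δ = B² − 4ac = p^δ Δ' with p ∤ Δ'. Then the number of solutions x ∈ ℤ/p^n ℤ equals: p^{⌊n/2⌋} if δ ≥ n; 2 p^{δ'} if δ = 2δ' < n and Δ' is a quadratic residue mod p; and 0 otherwise (i.e. if δ < n and either δ is odd or Δ' is a quadratic non-residue mod p). -/

import Mathlib

open Finset

/-- number of solutions of `y² ≡ d (mod p^k)` -/
noncomputable def QCC.N (p k : ℕ) (d : ℤ) : ℕ :=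
  ((Finset.range (p^k)).filter (fun y : ℕ => (p:ℤ)^k ∣ (y:ℤ)^2 - d)).card

section
variable {p : ℕ} [hp : Fact p.Prime]

lemma QCC.isUnit_cast (k : ℕ) {m : ℤ} (hm : ¬ (p:ℤ) ∣ m) : IsUnit (m : ZMod (p^k)) := by
  have hnat : ¬ p ∣ m.natAbs := fun h =>
    hm (Int.dvd_natAbs.mp (Int.natCast_dvd_natCast.mpr h))
  have hco : (m.natAbs).Coprime (p^k) :=
    Nat.Coprime.pow_right _ (Nat.coprime_comm.mp ((Nat.Prime.coprime_iff_not_dvd hp.1).mpr hnat))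
  have hu : IsUnit ((m.natAbs : ℕ) : ZMod (p^k)) := (ZMod.isUnit_iff_coprime _ _).mpr hco
  rcases Int.natAbs_eq m with h | h
  · rw [h, Int.cast_natCast]; exact hu
  · rw [h, Int.cast_neg, Int.cast_natCast]; exact hu.neg

lemma QCC.card_range_filter (m : ℕ) [NeZero m] (Q : ZMod m → Prop) [DecidablePred Q] :
    ((Finset.range m).filter (fun x : ℕ => Q (x : ZMod m))).card
      = (Finset.univ.filter Q).card := by
  refine Finset.card_bij (fun x _ => (x : ZMod m)) ?_ ?_ ?_
  · intro x hx
    simp only [mem_filter, mem_range] at hx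
    simp [hx.2]
  · intro x hx y hy hxy
    simp only [mem_filter, mem_range] at hx hy
    have := congrArg ZMod.val hxy
    rwa [ZMod.val_cast_of_lt hx.1, ZMod.val_cast_of_lt hy.1] at this
  · intro z hz
    refine ⟨z.val, ?_, ?_⟩
    · simp only [mem_filter, mem_range]
      exact ⟨ZMod.val_lt z, by simp [ZMod.natCast_val]; exact (mem_filter.mp hz).2⟩
    · simp [ZMod.natCast_val]

lemma QCC.dvd_iff_zmod (k : ℕ) (x : ℤ) : (p:ℤ)^k ∣ x ↔ (x : ZMod (p^k)) = 0 := by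
  rw [ZMod.intCast_zmod_eq_zero_iff_dvd]; push_cast; rfl

lemma QCC.N_eq_zmod (k : ℕ) (d : ℤ) :
    QCC.N p k d = (Finset.univ.filter
      (fun y : ZMod (p^k) => y^2 = (d : ZMod (p^k)))).card := by
  haveI : NeZero (p^k) := ⟨(pow_pos hp.1.pos k).ne'⟩
  rw [QCC.N, Finset.filter_congr (q := fun y : ℕ => ((y : ZMod (p^k))^2 = (d : ZMod (p^k))))
    (fun x _ => ?_), QCC.card_range_filter (p^k) (fun y : ZMod (p^k) => y^2 = (d : ZMod (p^k)))]
  rw [QCC.dvd_iff_zmod]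
  push_cast
  rw [sub_eq_zero]

/-- Hensel lifting of square roots -/
lemma QCC.exists_sqrt (hp2 : p ≠ 2) (k : ℕ) {d : ℤ} (hd : ¬ (p:ℤ) ∣ d)
    (h1 : legendreSym p d = 1) :
    ∃ y : ℤ, ¬ (p:ℤ) ∣ y ∧ (p:ℤ)^(k+1) ∣ y^2 - d := by
  have hd0 : (d : ZMod p) ≠ 0 := fun h => hd ((ZMod.intCast_zmod_eq_zero_iff_dvd d p).mp h)
  have hpint : Prime (p:ℤ) := Nat.prime_iff_prime_int.mp hp.1
  have hp2' : ¬ (p:ℤ) ∣ 2 := by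
    intro h
    have : p ∣ 2 := Int.ofNat_dvd.mp (by exact_mod_cast h)
    exact hp2 ((Nat.prime_dvd_prime_iff_eq hp.1 Nat.prime_two).mp this)
  induction k with
  | zero =>
    obtain ⟨r, hr⟩ := (legendreSym.eq_one_iff p hd0).mp h1
    refine ⟨(r.val : ℤ), ?_, ?_⟩
    · intro h
      have : ((r.val : ℤ) : ZMod p) = 0 := (ZMod.intCast_zmod_eq_zero_iff_dvd _ p).mpr h
      rw [Int.cast_natCast, ZMod.natCast_val, ZMod.cast_id] at this
      rw [this, mul_zero] at hr
      exact hd0 hr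
    · rw [pow_one, ← ZMod.intCast_zmod_eq_zero_iff_dvd]
      push_cast
      rw [ZMod.natCast_val, ZMod.cast_id, sub_eq_zero, sq]
      exact hr.symm
  | succ k ih =>
    obtain ⟨y, hy, hdvd⟩ := ih
    obtain ⟨t, ht⟩ := hdvd
    have hy2 : ¬ (p:ℤ) ∣ 2*y := fun h => (hpint.dvd_mul.mp h).elim hp2' hy
    have hu : IsUnit (2 * (y : ZMod p)) := by
      have := QCC.isUnit_cast (p := p) 1 hy2
      rw [pow_one] at this
      have h2y : ((2*y : ℤ) : ZMod p) = 2 * (y : ZMod p) := by push_cast; ring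
      rwa [h2y] at this
    have key : ∃ s : ℤ, (p:ℤ) ∣ t + 2*y*s := by
      refine ⟨(((-(t : ZMod p)) * (2 * (y : ZMod p))⁻¹).val : ℤ), ?_⟩
      rw [← ZMod.intCast_zmod_eq_zero_iff_dvd]
      push_cast
      rw [ZMod.natCast_val, ZMod.cast_id]
      have huu : (2 * (y : ZMod p)) * (2 * (y : ZMod p))⁻¹ = 1 := ZMod.mul_inv_of_unit _ hu
      linear_combination (-(t : ZMod p)) * huu
    obtain ⟨s, hps⟩ := key
    obtain ⟨w, hw⟩ := hps
    have hpy : (p:ℤ) ∣ (p:ℤ)^(k+1)*s := ⟨(p:ℤ)^k*s, by ring⟩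
    refine ⟨y + (p:ℤ)^(k+1) * s, fun h => hy (by simpa using dvd_sub h hpy), ?_⟩
    exact ⟨w + (p:ℤ)^k * s^2, by linear_combination ht + (p:ℤ)^(k+1) * hw⟩

end

section
variable {p : ℕ} [hp : Fact p.Prime]

lemma QCC.not_dvd_two (hp2 : p ≠ 2) : ¬ (p:ℤ) ∣ 2 := by
  intro h
  have : p ∣ 2 := Int.ofNat_dvd.mp (by exact_mod_cast h)
  exact hp2 ((Nat.prime_dvd_prime_iff_eq hp.1 Nat.prime_two).mp this)

lemma QCC.count_unit_neg (k : ℕ) (hk : 1 ≤ k) {d : ℤ}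
    (hneg : legendreSym p d = -1) : QCC.N p k d = 0 := by
  rw [QCC.N, Finset.card_eq_zero, Finset.filter_eq_empty_iff]
  intro y _
  intro hdvd
  have hpd : (p:ℤ) ∣ (y:ℤ)^2 - d :=
    dvd_trans (dvd_pow_self (p:ℤ) (by omega)) hdvd
  have hsq : ((y:ℕ) : ZMod p)^2 = (d : ZMod p) := by
    have h0 : (((y:ℤ)^2 - d : ℤ) : ZMod p) = 0 := (ZMod.intCast_zmod_eq_zero_iff_dvd _ p).mpr hpd
    push_cast at h0
    rwa [sub_eq_zero] at h0
  exact (legendreSym.eq_neg_one_iff p).mp hneg ⟨_, by rw [← hsq, pow_two]⟩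

lemma QCC.count_unit_pos (hp2 : p ≠ 2) (k : ℕ) (hk : 1 ≤ k) {d : ℤ}
    (hd : ¬ (p:ℤ) ∣ d) (h1 : legendreSym p d = 1) : QCC.N p k d = 2 := by
  obtain ⟨k', rfl⟩ : ∃ k', k = k'+1 := ⟨k-1, by omega⟩
  obtain ⟨y₀, hy₀, hsq⟩ := QCC.exists_sqrt hp2 k' hd h1
  rw [QCC.N_eq_zmod]
  have hpint : Prime (p:ℤ) := Nat.prime_iff_prime_int.mp hp.1
  have hp2' : ¬ (p:ℤ) ∣ 2 := QCC.not_dvd_two hp2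
  set s : ZMod (p^(k'+1)) := ((y₀ : ℤ) : ZMod (p^(k'+1))) with hsdef
  have hs2 : s^2 = (d : ZMod (p^(k'+1))) := by
    have h0 := (QCC.dvd_iff_zmod (p := p) (k'+1) (y₀^2 - d)).mp hsq
    push_cast at h0
    rw [sub_eq_zero] at h0
    rw [hsdef]
    push_cast
    exact h0
  have hfilter : Finset.univ.filter (fun y : ZMod (p^(k'+1)) => y^2 = (d : ZMod (p^(k'+1))))
      = {s, -s} := by
    ext y
    simp only [Finset.mem_filter, Finset.mem_univ, true_and, Finset.mem_insert,
      Finset.mem_singleton]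
    constructor
    · intro hy
      have hyy : (p:ℤ)^(k'+1) ∣ ((y.val : ℤ) - y₀) * ((y.val : ℤ) + y₀) := by
        rw [QCC.dvd_iff_zmod]
        push_cast
        rw [ZMod.natCast_val, ZMod.cast_id]
        have hys : ((y₀ : ℤ) : ZMod (p^(k'+1))) = s := hsdef.symm
        rw [hys]
        linear_combination hy - hs2
      have hnotboth : ¬ ((p:ℤ) ∣ ((y.val:ℤ) - y₀) ∧ (p:ℤ) ∣ ((y.val:ℤ) + y₀)) := by
        rintro ⟨ha', hb'⟩
        have h2y : (p:ℤ) ∣ 2*y₀ := by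
          have hd' := dvd_sub hb' ha'
          have : ((y.val:ℤ) + y₀) - ((y.val:ℤ) - y₀) = 2*y₀ := by ring
          rwa [this] at hd'
        exact (hpint.dvd_mul.mp h2y).elim hp2' hy₀
      by_cases hc : (p:ℤ) ∣ ((y.val:ℤ) - y₀)
      · have hnc : ¬ (p:ℤ) ∣ ((y.val:ℤ) + y₀) := fun h => hnotboth ⟨hc, h⟩
        have hcop : IsCoprime ((p:ℤ)^(k'+1)) ((y.val:ℤ) + y₀) :=
          IsCoprime.pow_left ((hpint.coprime_iff_not_dvd).mpr hnc)
        have hdv : (p:ℤ)^(k'+1) ∣ ((y.val:ℤ) - y₀) := hcop.dvd_of_dvd_mul_right hyy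
        left
        have h0 := (QCC.dvd_iff_zmod (p := p) (k'+1) _).mp hdv
        push_cast at h0
        rw [ZMod.natCast_val, ZMod.cast_id, sub_eq_zero] at h0
        rw [hsdef]
        exact_mod_cast h0
      · have hcop : IsCoprime ((p:ℤ)^(k'+1)) ((y.val:ℤ) - y₀) :=
          IsCoprime.pow_left ((hpint.coprime_iff_not_dvd).mpr hc)
        have hdv : (p:ℤ)^(k'+1) ∣ ((y.val:ℤ) + y₀) := hcop.dvd_of_dvd_mul_left hyy
        right
        have h0 := (QCC.dvd_iff_zmod (p := p) (k'+1) _).mp hdv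
        push_cast at h0
        rw [ZMod.natCast_val, ZMod.cast_id] at h0
        rw [hsdef]
        have : y = -((y₀:ℤ) : ZMod (p^(k'+1))) := by
          have := eq_neg_of_add_eq_zero_left h0
          exact_mod_cast this
        exact_mod_cast this
    · rintro (rfl | rfl)
      · exact hs2
      · rw [neg_sq]; exact hs2
  rw [hfilter]
  have hsne : s ≠ -s := by
    intro h
    have h2s : ((2*y₀ : ℤ) : ZMod (p^(k'+1))) = 0 := by
      push_cast
      have hys : ((y₀ : ℤ) : ZMod (p^(k'+1))) = s := hsdef.symm
      rw [hys]
      linear_combination h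
    have hdvd2 : (p:ℤ)^(k'+1) ∣ 2*y₀ := (QCC.dvd_iff_zmod _ _).mpr h2s
    have hp1 : (p:ℤ) ∣ 2*y₀ := dvd_trans (dvd_pow_self _ (by omega)) hdvd2
    exact (hpint.dvd_mul.mp hp1).elim hp2' hy₀
  rw [Finset.card_pair hsne]

end

section
variable {p : ℕ} [hp : Fact p.Prime]

lemma QCC.card_dvd_filter (c k : ℕ) (hc : c ≤ k) :
    ((Finset.range (p^k)).filter (fun y => p^c ∣ y)).card = p^(k-c) := by
  have hpc : 0 < p^c := pow_pos hp.1.pos c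
  have hkey : p^(k-c) * p^c = p^k := by rw [← pow_add]; congr 1; omega
  refine (Finset.card_nbij' (fun y => y / p^c) (fun t => p^c * t) ?_ ?_ ?_ ?_).trans
    (Finset.card_range _)
  · intro y hy
    simp only [Finset.mem_coe, Finset.mem_filter, Finset.mem_range] at hy ⊢
    exact (Nat.div_lt_iff_lt_mul hpc).mpr (by rw [hkey]; exact hy.1)
  · intro t ht
    simp only [Finset.mem_coe, Finset.mem_filter, Finset.mem_range] at ht ⊢
    constructor
    · calc p^c * t < p^c * p^(k-c) := (Nat.mul_lt_mul_left hpc).mpr ht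
        _ = p^k := by rw [mul_comm]; exact hkey
    · exact dvd_mul_right _ _
  · intro y hy
    exact Nat.mul_div_cancel' (Finset.mem_filter.mp hy).2
  · intro t ht
    exact Nat.mul_div_cancel_left t hpc

lemma QCC.count_dvd (k : ℕ) {d : ℤ} (hd : (p:ℤ)^k ∣ d) : QCC.N p k d = p^(k/2) := by
  rw [QCC.N]
  have hiff : ∀ y : ℕ, ((p:ℤ)^k ∣ (y:ℤ)^2 - d) ↔ (p^((k+1)/2) ∣ y) := by
    intro y
    rw [dvd_sub_left hd]
    have hcast : ((p:ℤ)^k ∣ (y:ℤ)^2) ↔ (p^k ∣ y^2) := by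
      rw [show ((y:ℤ)^2) = ((y^2 : ℕ) : ℤ) by push_cast; ring,
        show ((p:ℤ)^k) = ((p^k : ℕ) : ℤ) by push_cast; ring, Int.natCast_dvd_natCast]
    rw [hcast]
    rcases eq_or_ne y 0 with rfl | hy
    · simp
    · rw [Nat.Prime.pow_dvd_iff_le_factorization hp.1 (pow_ne_zero 2 hy),
        Nat.Prime.pow_dvd_iff_le_factorization hp.1 hy]
      rw [Nat.factorization_pow]
      simp only [Finsupp.smul_apply, smul_eq_mul]
      omega
  rw [Finset.filter_congr (fun y _ => hiff y), QCC.card_dvd_filter ((k+1)/2) k (by omega)]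
  congr 1
  omega

lemma QCC.dvd_sq_shift (k : ℕ) (d : ℤ) (z q : ℕ) :
    ((p:ℤ)^k ∣ ((z:ℤ))^2 - d) ↔ ((p:ℤ)^k ∣ ((z + p^k*q : ℕ):ℤ)^2 - d) := by
  have hcast : ((z + p^k*q : ℕ):ℤ) = (z:ℤ) + (p:ℤ)^k*q := by push_cast; ring
  rw [hcast]
  constructor <;> rintro ⟨e, he⟩
  · exact ⟨e + 2*z*q + (p:ℤ)^k*q^2, by linear_combination he⟩
  · exact ⟨e - 2*z*q - (p:ℤ)^k*q^2, by linear_combination he⟩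

end

section
variable {p : ℕ} [hp : Fact p.Prime]

lemma QCC.count_step (k : ℕ) (d : ℤ) :
    QCC.N p (k+2) ((p:ℤ)^2 * d) = p * QCC.N p k d := by
  have hp0 : 0 < p := hp.1.pos
  have hpk : 0 < p^k := pow_pos hp0 k
  have hpint : Prime (p:ℤ) := Nat.prime_iff_prime_int.mp hp.1
  have hpow1 : p^(k+1) = p * p^k := by ring
  have hpow2 : p^(k+2) = p * p^(k+1) := by ring
  have key : ∀ y : ℕ, ((p:ℤ)^(k+2) ∣ (y:ℤ)^2 - (p:ℤ)^2*d) → p ∣ y := by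
    intro y h2
    have d1 : (p:ℤ) ∣ (y:ℤ)^2 - (p:ℤ)^2*d := dvd_trans (dvd_pow_self _ (by omega)) h2
    have d2 : (p:ℤ) ∣ (y:ℤ)^2 := by
      have h3 : (y:ℤ)^2 = ((y:ℤ)^2 - (p:ℤ)^2*d) + (p:ℤ)^2*d := by ring
      rw [h3]
      exact dvd_add d1 ⟨(p:ℤ)*d, by ring⟩
    have h4 : (p:ℤ) ∣ (y:ℤ) := hpint.dvd_of_dvd_pow d2
    exact_mod_cast h4
  have quot : ∀ w : ℕ, ((p:ℤ)^(k+2) ∣ ((p*w : ℕ):ℤ)^2 - (p:ℤ)^2*d) ↔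
      ((p:ℤ)^k ∣ (w:ℤ)^2 - d) := by
    intro w
    have hc : ((p*w : ℕ):ℤ) = (p:ℤ)*w := by push_cast; ring
    rw [hc]
    constructor <;> rintro ⟨e, he⟩
    · refine ⟨e, ?_⟩
      have h2 : ((p:ℤ)^2 : ℤ) ≠ 0 := pow_ne_zero _ (by exact_mod_cast hp0.ne')
      apply mul_left_cancel₀ h2
      linear_combination he
    · exact ⟨e, by linear_combination (p:ℤ)^2 * he⟩
  have hcard : ((Finset.range (p^(k+2))).filter
        (fun y : ℕ => (p:ℤ)^(k+2) ∣ (y:ℤ)^2 - (p:ℤ)^2*d)).card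
      = (Finset.range p ×ˢ ((Finset.range (p^k)).filter
        (fun z : ℕ => (p:ℤ)^k ∣ (z:ℤ)^2 - d))).card := by
    refine Finset.card_nbij' (fun y => (y / p^(k+1), (y / p) % p^k))
      (fun z => p * z.2 + p^(k+1) * z.1) ?_ ?_ ?_ ?_
    · intro y hy
      simp only [Finset.mem_coe, Finset.mem_filter, Finset.mem_range, Finset.mem_product] at hy ⊢
      obtain ⟨hy1, hy2⟩ := hy
      obtain ⟨w, rfl⟩ := key y hy2
      refine ⟨?_, ?_, ?_⟩
      · exact (Nat.div_lt_iff_lt_mul (pow_pos hp0 (k+1))).mpr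
          (by rw [← hpow2]; exact hy1)
      · rw [Nat.mul_div_cancel_left w hp0]
        exact Nat.mod_lt _ hpk
      · rw [Nat.mul_div_cancel_left w hp0]
        have hw2 : (p:ℤ)^k ∣ (w:ℤ)^2 - d := (quot w).mp hy2
        have hsplit : w = w % p^k + p^k * (w / p^k) := (Nat.mod_add_div w (p^k)).symm
        rw [hsplit] at hw2
        exact ((QCC.dvd_sq_shift k d (w % p^k) (w / p^k)).mpr hw2)
    · intro z hz
      simp only [Finset.mem_coe, Finset.mem_filter, Finset.mem_range, Finset.mem_product] at hz ⊢
      obtain ⟨hj, hz1, hz2⟩ := hz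
      constructor
      · have h1 : p * z.2 < p^(k+1) := by rw [hpow1]; exact (Nat.mul_lt_mul_left hp0).mpr hz1
        have h2 : p^(k+1) * (z.1 + 1) ≤ p^(k+1) * p := Nat.mul_le_mul_left _ (by omega)
        calc p * z.2 + p^(k+1) * z.1 < p^(k+1) + p^(k+1) * z.1 := by omega
          _ = p^(k+1) * (z.1 + 1) := by ring
          _ ≤ p^(k+1) * p := h2
          _ = p^(k+2) := by ring
      · have hrw : p * z.2 + p^(k+1) * z.1 = p * (z.2 + p^k * z.1) := by rw [hpow1]; ring
        rw [hrw, quot]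
        exact (QCC.dvd_sq_shift k d z.2 z.1).mp hz2
    · intro y hy
      simp only [Finset.mem_coe, Finset.mem_filter, Finset.mem_range] at hy
      obtain ⟨w, rfl⟩ := key y hy.2
      simp only
      rw [Nat.mul_div_cancel_left w hp0]
      have hdiv : (p*w)/p^(k+1) = w / p^k := by
        rw [hpow1, Nat.mul_div_mul_left _ _ hp0]
      rw [hdiv, hpow1]
      have hmd := Nat.mod_add_div w (p^k)
      calc p * (w % p^k) + p * p^k * (w / p^k) = p * (w % p^k + p^k * (w/p^k)) := by ring
        _ = p * w := by rw [hmd]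
    · intro z hz
      simp only [Finset.mem_coe, Finset.mem_filter, Finset.mem_range, Finset.mem_product] at hz
      obtain ⟨hj, hz1, _⟩ := hz
      have e1 : (p * z.2 + p^(k+1) * z.1) / p^(k+1) = z.1 := by
        rw [Nat.add_mul_div_left _ _ (pow_pos hp0 (k+1))]
        rw [Nat.div_eq_of_lt (by rw [hpow1]; exact (Nat.mul_lt_mul_left hp0).mpr hz1)]
        omega
      have e2 : (p * z.2 + p^(k+1) * z.1) / p = z.2 + p^k * z.1 := by
        rw [hpow1, show p * z.2 + p * p^k * z.1 = p * (z.2 + p^k * z.1) by ring,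
          Nat.mul_div_cancel_left _ hp0]
      simp only
      rw [e1, e2, Nat.add_mul_mod_self_left, Nat.mod_eq_of_lt hz1]

  rw [QCC.N, QCC.N, hcard, Finset.card_product, Finset.card_range]
end

section
variable {p : ℕ} [hp : Fact p.Prime]

lemma QCC.branch2 (hp2 : p ≠ 2) :
    ∀ δ' k : ℕ, ∀ {d' : ℤ}, 2*δ' < k → ¬ (p:ℤ) ∣ d' → legendreSym p d' = 1 →
      QCC.N p k ((p:ℤ)^(2*δ') * d') = 2 * p^δ' := by
  intro δ'
  induction δ' with
  | zero =>
    intro k d' hlt hd h1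
    have h := QCC.count_unit_pos hp2 k (by omega) hd h1
    simpa using h
  | succ m ih =>
    intro k d' hlt hd h1
    obtain ⟨k', rfl⟩ : ∃ k', k = k'+2 := ⟨k-2, by omega⟩
    have hrw : (p:ℤ)^(2*(m+1)) * d' = (p:ℤ)^2 * ((p:ℤ)^(2*m) * d') := by ring
    rw [hrw, QCC.count_step, ih k' (by omega) hd h1]
    ring

lemma QCC.branch3 (hp2 : p ≠ 2) :
    ∀ δ k : ℕ, ∀ {d' : ℤ}, δ < k → ¬ (p:ℤ) ∣ d' →
      (Odd δ ∨ legendreSym p d' = -1) → QCC.N p k ((p:ℤ)^δ * d') = 0 := by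
  have hpint : Prime (p:ℤ) := Nat.prime_iff_prime_int.mp hp.1
  intro δ
  induction δ using Nat.strong_induction_on with
  | _ δ ih =>
    match δ with
    | 0 =>
      intro k d' hlt hd hcase
      rcases hcase with hodd | hneg
      · exact absurd hodd (by simp)
      · have h := QCC.count_unit_neg k (by omega) hneg
        simpa using h
    | 1 =>
      intro k d' hlt hd _
      have hrw : (p:ℤ)^1 * d' = (p:ℤ) * d' := by ring
      rw [QCC.N, Finset.card_eq_zero, Finset.filter_eq_empty_iff]
      intro y _ hdvd
      have h2 : (p:ℤ)^2 ∣ (y:ℤ)^2 - (p:ℤ)^1*d' := dvd_trans (pow_dvd_pow _ (by omega)) hdvd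
      have hpy : (p:ℤ) ∣ (y:ℤ) := by
        have d0 : (p:ℤ) ∣ (y:ℤ)^2 - (p:ℤ)^1*d' :=
          dvd_trans (dvd_pow_self _ (by omega)) h2
        have d1 : (p:ℤ) ∣ (y:ℤ)^2 := by
          have h3 : (y:ℤ)^2 = ((y:ℤ)^2 - (p:ℤ)^1*d') + (p:ℤ)^1*d' := by ring
          rw [h3]
          exact dvd_add d0 ⟨d', by ring⟩
        exact hpint.dvd_of_dvd_pow d1
      obtain ⟨w, hw⟩ := hpy
      apply hd
      have hsq : (p:ℤ)^2 ∣ (p:ℤ)^1*d' := by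
        have h4 : (p:ℤ)^1*d' = (y:ℤ)^2 - ((y:ℤ)^2 - (p:ℤ)^1*d') := by ring
        rw [h4]
        exact dvd_sub (by rw [hw]; exact ⟨w^2, by ring⟩) h2
      obtain ⟨e, he⟩ := hsq
      refine ⟨e, ?_⟩
      have hp0 : (p:ℤ) ≠ 0 := by exact_mod_cast hp.1.pos.ne'
      apply mul_left_cancel₀ hp0
      linear_combination he
    | (m+2) =>
      intro k d' hlt hd hcase
      obtain ⟨k', rfl⟩ : ∃ k', k = k'+2 := ⟨k-2, by omega⟩
      have hrw : (p:ℤ)^(m+2) * d' = (p:ℤ)^2 * ((p:ℤ)^m * d') := by ring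
      have hcase' : Odd m ∨ legendreSym p d' = -1 := by
        rcases hcase with h | h
        · left; rw [Nat.odd_iff] at h ⊢; omega
        · right; exact h
      rw [hrw, QCC.count_step, ih m (by omega) k' (by omega) hd hcase']
      ring

end

/-- Counting solutions of the quadratic congruence `a x² + B x + c ≡ 0 (mod p^n)`
for an odd prime `p` with `p ∤ a`, in terms of `δ = ord_p(Δ)` and the Legendre
symbol of `Δ' = Δ/p^δ`. -/
theorem quadratic_congruence_count (p : ℕ) [hp : Fact p.Prime] (hp2 : p ≠ 2)
    (n : ℕ) (hn : 1 ≤ n) (a B c : ℤ) (ha : ¬ (p : ℤ) ∣ a)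
    (Δ : ℤ) (hΔ : Δ = B ^ 2 - 4 * a * c)
    (M : ℕ)
    (hM : M = ((Finset.range (p ^ n)).filter
        (fun x : ℕ => (p : ℤ) ^ n ∣ a * (x : ℤ) ^ 2 + B * (x : ℤ) + c)).card) :
    ((Δ = 0 ∨ n ≤ padicValInt p Δ) → M = p ^ (n / 2)) ∧
    (∀ δ' : ℕ, Δ ≠ 0 → padicValInt p Δ = 2 * δ' → 2 * δ' < n →
        legendreSym p (Δ / (p : ℤ) ^ (2 * δ')) = 1 → M = 2 * p ^ δ') ∧
    (Δ ≠ 0 → padicValInt p Δ < n →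
        (Odd (padicValInt p Δ) ∨ legendreSym p (Δ / (p : ℤ) ^ padicValInt p Δ) = -1) →
        M = 0) := by
  haveI : NeZero (p^n) := ⟨(pow_pos hp.1.pos n).ne'⟩
  have hpint : Prime (p:ℤ) := Nat.prime_iff_prime_int.mp hp.1
  have hp2' : ¬ (p:ℤ) ∣ 2 := QCC.not_dvd_two hp2
  set A : ZMod (p^n) := ((a : ℤ) : ZMod (p^n)) with hA
  set Bz : ZMod (p^n) := ((B : ℤ) : ZMod (p^n)) with hB
  set Cz : ZMod (p^n) := ((c : ℤ) : ZMod (p^n)) with hC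
  have hD : ((Δ : ℤ) : ZMod (p^n)) = Bz^2 - 4*A*Cz := by
    rw [hΔ, hA, hB, hC]; push_cast; ring
  have hu2 : IsUnit (2*A) := by
    have h := QCC.isUnit_cast (p := p) n (m := 2*a)
      (fun h => (hpint.dvd_mul.mp h).elim hp2' ha)
    rw [show ((2*a : ℤ) : ZMod (p^n)) = 2*A by rw [hA]; push_cast; ring] at h
    exact h
  have hu4 : IsUnit (4*A) := by
    have h4 : ¬ (p:ℤ) ∣ 4*a := by
      intro h
      rcases hpint.dvd_mul.mp h with h | h
      · exact hp2' (by
          have : (4:ℤ) = 2*2 := by norm_num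
          rw [this] at h
          exact (hpint.dvd_mul.mp h).elim id id)
      · exact ha h
    have h := QCC.isUnit_cast (p := p) n (m := 4*a) h4
    rw [show ((4*a : ℤ) : ZMod (p^n)) = 4*A by rw [hA]; push_cast; ring] at h
    exact h
  -- step 1 : M equals the ZMod count of the quadratic
  have e1 : M = (Finset.univ.filter
      (fun x : ZMod (p^n) => A*x^2 + Bz*x + Cz = 0)).card := by
    rw [hM, Finset.filter_congr (q := fun x : ℕ =>
        (A*(x : ZMod (p^n))^2 + Bz*(x : ZMod (p^n)) + Cz = 0)) (fun x _ => ?_),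
      QCC.card_range_filter (p^n) (fun x : ZMod (p^n) => A*x^2 + Bz*x + Cz = 0)]
    rw [QCC.dvd_iff_zmod, hA, hB, hC]
    push_cast
    rfl
  -- step 2 : bijection x ↦ 2Ax + B
  have hrel : ∀ x : ZMod (p^n), (2*A*x + Bz)^2 - ((Δ : ℤ) : ZMod (p^n))
      = 4*A*(A*x^2 + Bz*x + Cz) := by
    intro x
    rw [hD]
    ring
  have e2 : (Finset.univ.filter (fun x : ZMod (p^n) => A*x^2 + Bz*x + Cz = 0)).card
      = (Finset.univ.filter
        (fun y : ZMod (p^n) => y^2 = ((Δ : ℤ) : ZMod (p^n)))).card := by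
    refine Finset.card_bij (fun x _ => 2*A*x + Bz) ?_ ?_ ?_
    · intro x hx
      simp only [Finset.mem_filter, Finset.mem_univ, true_and] at hx ⊢
      have := hrel x
      rw [hx, mul_zero] at this
      exact sub_eq_zero.mp this
    · intro x hx y hy hxy
      have h' : (2*A)*x = (2*A)*y := add_right_cancel hxy
      exact hu2.mul_left_cancel h'
    · intro y hy
      simp only [Finset.mem_filter, Finset.mem_univ, true_and] at hy
      refine ⟨(hu2.unit⁻¹ : (ZMod (p^n))ˣ) * (y - Bz), ?_, ?_⟩
      · simp only [Finset.mem_filter, Finset.mem_univ, true_and]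
        apply hu4.mul_left_cancel
        rw [mul_zero, ← hrel]
        have hinv : (2*A) * ((hu2.unit⁻¹ : (ZMod (p^n))ˣ) : ZMod (p^n)) = 1 := by
          nth_rewrite 1 [← hu2.unit_spec]
          exact hu2.unit.mul_inv
        calc (2*A*((hu2.unit⁻¹ : (ZMod (p^n))ˣ) * (y - Bz)) + Bz)^2 - ((Δ : ℤ) : ZMod (p^n))
            = ((2*A*((hu2.unit⁻¹ : (ZMod (p^n))ˣ) : ZMod (p^n)))*(y - Bz) + Bz)^2
              - ((Δ : ℤ) : ZMod (p^n)) := by ring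
          _ = y^2 - ((Δ : ℤ) : ZMod (p^n)) := by rw [hinv]; ring
          _ = 0 := by rw [hy, sub_self]
      · have hinv : (2*A) * ((hu2.unit⁻¹ : (ZMod (p^n))ˣ) : ZMod (p^n)) = 1 := by
          nth_rewrite 1 [← hu2.unit_spec]
          exact hu2.unit.mul_inv
        calc 2*A*((hu2.unit⁻¹ : (ZMod (p^n))ˣ) * (y - Bz)) + Bz
            = ((2*A)*((hu2.unit⁻¹ : (ZMod (p^n))ˣ) : ZMod (p^n)))*(y - Bz) + Bz := by ring
          _ = y := by rw [hinv]; ring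
  have hMN : M = QCC.N p n Δ := by
    rw [e1, e2, QCC.N_eq_zmod]
  refine ⟨?_, ?_, ?_⟩
  · intro h
    have hdvd : (p:ℤ)^n ∣ Δ := (padicValInt_dvd_iff n Δ).mpr h
    rw [hMN, QCC.count_dvd n hdvd]
  · intro δ' hΔ0 hval hlt hleg
    have hdvd : (p:ℤ)^(2*δ') ∣ Δ := by rw [← hval]; exact padicValInt_dvd Δ
    have hquot : Δ = (p:ℤ)^(2*δ') * (Δ / (p:ℤ)^(2*δ')) := (Int.mul_ediv_cancel' hdvd).symm
    have hnd : ¬ (p:ℤ) ∣ (Δ / (p:ℤ)^(2*δ')) := by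
      intro hcon
      obtain ⟨e, he⟩ := hcon
      have : (p:ℤ)^(2*δ'+1) ∣ Δ := ⟨e, by rw [hquot, he]; ring⟩
      rw [padicValInt_dvd_iff, hval] at this
      rcases this with h0 | hle
      · exact hΔ0 h0
      · omega
    rw [hMN, hquot]
    exact QCC.branch2 hp2 δ' n hlt hnd hleg
  · intro hΔ0 hlt hcase
    set δ := padicValInt p Δ with hδ
    have hdvd : (p:ℤ)^δ ∣ Δ := padicValInt_dvd Δ
    have hquot : Δ = (p:ℤ)^δ * (Δ / (p:ℤ)^δ) := (Int.mul_ediv_cancel' hdvd).symm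
    have hnd : ¬ (p:ℤ) ∣ (Δ / (p:ℤ)^δ) := by
      intro hcon
      obtain ⟨e, he⟩ := hcon
      have : (p:ℤ)^(δ+1) ∣ Δ := ⟨e, by rw [hquot, he]; ring⟩
      rw [padicValInt_dvd_iff, ← hδ] at this
      rcases this with h0 | hle
      · exact hΔ0 h0
      · omega
    rw [hMN, hquot]
    exact QCC.branch3 hp2 δ n hlt hnd hcase
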